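/- Let u be a fixed vertex of a graph G, and for each vertex v with two owned edges e_1, e_2 define A_{e_1,e_2}(v) as the set of vertices z such that every shortest path in G from z to u passes through v with predecessor v_1 or v_2 (the other endpoints of e_1, e_2). If v, v' are vertices with d_G(u,v) = d_G(u,v') and {e_1,e_2}, {e_1',e_2'} are two distinct (disjoint-as-sets) pairs of edges owned by v and v' respectively, then A_{e_1,e_2}(v) and A_{e_1',e_2'}(v') are disjoint. -/

import Mathlib

/-- The walk `p` from `z` to `u` passes through `v` with predecessor `x`. -/
def PassesThroughWithPred {V : Type*} (G : SimpleGraph V) {z u : V}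
    (p : G.Walk z u) (x v : V) : Prop :=
  ∃ (q : G.Walk z x) (h : G.Adj x v) (r : G.Walk v u),
    p = q.append (SimpleGraph.Walk.cons h r)

lemma pass_getVert {V : Type*} (G : SimpleGraph V) (hG : G.Connected) {z u x v : V}
    (p : G.Walk z u) (hp : p.length = G.dist z u)
    (h : PassesThroughWithPred G p x v) :
    G.dist u v < p.length ∧
    p.getVert (p.length - G.dist u v) = v ∧
    p.getVert (p.length - G.dist u v - 1) = x := by
  obtain ⟨q, hadj, r, rfl⟩ := h
  obtain ⟨s, hs⟩ := hG.exists_walk_length_eq_dist v u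
  have hlen : (q.append (SimpleGraph.Walk.cons hadj r)).length = q.length + (r.length + 1) := by
    simp [SimpleGraph.Walk.length_append]
  have hle : G.dist z u ≤ q.length + (s.length + 1) := by
    have := SimpleGraph.dist_le (q.append (SimpleGraph.Walk.cons hadj s))
    simpa [SimpleGraph.Walk.length_append] using this
  have h1 : G.dist v u ≤ r.length := SimpleGraph.dist_le r
  have hr : r.length = G.dist v u := by omega
  have hcomm : G.dist u v = G.dist v u := SimpleGraph.dist_comm
  have hidx : (q.append (SimpleGraph.Walk.cons hadj r)).length - G.dist u v
      = q.length + 1 := by omega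
  refine ⟨by omega, ?_, ?_⟩
  · rw [hidx, SimpleGraph.Walk.getVert_append]
    simp [SimpleGraph.Walk.getVert_cons_succ]
  · rw [hidx, Nat.add_sub_cancel, SimpleGraph.Walk.getVert_append]
    simp

theorem stmt_17 {V : Type*} [Fintype V] (G : SimpleGraph V) (hG : G.Connected)
    (u v v' v₁ v₂ v₁' v₂' : V)
    (ha₁ : G.Adj v v₁) (ha₂ : G.Adj v v₂) (ha₁' : G.Adj v' v₁') (ha₂' : G.Adj v' v₂')
    (hpair : s(v, v₁) ≠ s(v, v₂)) (hpair' : s(v', v₁') ≠ s(v', v₂'))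
    (hdisj : ({s(v, v₁), s(v, v₂)} : Set (Sym2 V)) ∩ {s(v', v₁'), s(v', v₂')} = ∅)
    (hdist : G.dist u v = G.dist u v')
    (A A' : Set V)
    (hA : A = {z : V | ∀ p : G.Walk z u, p.length = G.dist z u →
      PassesThroughWithPred G p v₁ v ∨ PassesThroughWithPred G p v₂ v})
    (hA' : A' = {z : V | ∀ p : G.Walk z u, p.length = G.dist z u →
      PassesThroughWithPred G p v₁' v' ∨ PassesThroughWithPred G p v₂' v'}) :
    Disjoint A A' := by
  rw [Set.disjoint_left]
  intro z hz hz'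
  rw [hA] at hz
  rw [hA'] at hz'
  obtain ⟨p, hp⟩ := hG.exists_walk_length_eq_dist z u
  have h1 : ∃ x, (x = v₁ ∨ x = v₂) ∧ PassesThroughWithPred G p x v := by
    rcases hz p hp with h | h
    · exact ⟨v₁, Or.inl rfl, h⟩
    · exact ⟨v₂, Or.inr rfl, h⟩
  have h2 : ∃ x, (x = v₁' ∨ x = v₂') ∧ PassesThroughWithPred G p x v' := by
    rcases hz' p hp with h | h
    · exact ⟨v₁', Or.inl rfl, h⟩
    · exact ⟨v₂', Or.inr rfl, h⟩
  obtain ⟨x, hx, hpass⟩ := h1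
  obtain ⟨x', hx', hpass'⟩ := h2
  obtain ⟨_, hv, hxv⟩ := pass_getVert G hG p hp hpass
  obtain ⟨_, hv', hxv'⟩ := pass_getVert G hG p hp hpass'
  rw [← hdist] at hv' hxv'
  have hvv : v = v' := hv.symm.trans hv'
  have hxx : x = x' := hxv.symm.trans hxv'
  have hmem : s(v, x) ∈ ({s(v, v₁), s(v, v₂)} : Set (Sym2 V)) ∩ {s(v', v₁'), s(v', v₂')} := by
    constructor
    · rcases hx with rfl | rfl <;> simp
    · rw [hvv, hxx]
      rcases hx' with rfl | rfl <;> simp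
  rw [hdisj] at hmem
  exact hmem
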